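/- The linear infinite-dimensional backstepping transformation and its claimed inverse are mutually inverse: let A be a real n x n matrix, B in R^n, K a 1 x n row vector, and D_hat > 0. For any X in R^n and any continuous function u_hat : [0,1] -> R, define w_hat(x) = u_hat(x) - K e^{A D_hat x} X - D_hat * integral from 0 to x of K e^{A D_hat (x - y)} B u_hat(y) dy for x in [0,1]. Then for all x in [0,1] it holds that u_hat(x) = w_hat(x) + K e^{(A + B K) D_hat x} X + D_hat * integral from 0 to x of K e^{(A + B K) D_hat (x - y)} B w_hat(y) dy. Conversely, if w_hat : [0,1] -> R is continuous and u_hat is defined from w_hat by the second formula, then w_hat is recovered from u_hat by the first formula. -/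

import Mathlib

open Matrix MeasureTheory intervalIntegral Set

noncomputable section

namespace BackSt

open NormedSpace

section helpers

attribute [local instance] Matrix.linftyOpSemiNormedRing Matrix.linftyOpNormedRing
  Matrix.linftyOpNormedAlgebra

variable {n : ℕ}

lemma hasDerivAt_expM (M : Matrix (Fin n) (Fin n) ℝ) (D x : ℝ) :
    HasDerivAt (fun t : ℝ => exp ((D * t) • M))
      (D • (M * exp ((D * x) • M))) x := by
  have h := hasDerivAt_exp_smul_const' (𝕂 := ℝ) M (D * x)
  have h2 : HasDerivAt (fun t : ℝ => D * t) D x := by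
    simpa using (hasDerivAt_id x).const_mul D
  have := h.scomp x h2
  simp only [Function.comp_def, smul_smul] at this
  exact this

lemma exp_mul_exp_neg (M : Matrix (Fin n) (Fin n) ℝ) (a : ℝ) :
    exp (a • M) * exp ((-a) • M) = 1 := by
  rw [← Matrix.exp_add_of_commute _ _ (((Commute.refl M).smul_left a).smul_right (-a))]
  rw [← add_smul, add_neg_cancel, zero_smul]
  exact exp_zero

/-- `mulVec` by a fixed vector as CLM in the matrix. -/
def mulVecCLM (v : Fin n → ℝ) : Matrix (Fin n) (Fin n) ℝ →L[ℝ] (Fin n → ℝ) :=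
  LinearMap.toContinuousLinearMap
    { toFun := fun M => M.mulVec v
      map_add' := by intro M N; simp [Matrix.add_mulVec]
      map_smul' := by intro c M; simp [Matrix.smul_mulVec]}

@[simp] lemma mulVecCLM_apply (v : Fin n → ℝ) (M : Matrix (Fin n) (Fin n) ℝ) :
    mulVecCLM v M = M.mulVec v := rfl

/-- `mulVec` as a continuous linear map in the matrix argument (bundled twice). -/
def toCLM : Matrix (Fin n) (Fin n) ℝ →L[ℝ] ((Fin n → ℝ) →L[ℝ] (Fin n → ℝ)) :=
  LinearMap.toContinuousLinearMap
    { toFun := fun M => LinearMap.toContinuousLinearMap (Matrix.mulVecLin M)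
      map_add' := by intro M N; ext v; simp [Matrix.mulVecLin_apply, Matrix.add_mulVec]
      map_smul' := by intro c M; ext v; simp [Matrix.mulVecLin_apply, Matrix.smul_mulVec] }

@[simp] lemma toCLM_apply (M : Matrix (Fin n) (Fin n) ℝ) (v : Fin n → ℝ) :
    toCLM M v = M.mulVec v := rfl

/-- dot product with `K` as a continuous linear map. -/
def dotCLM (K : Fin n → ℝ) : (Fin n → ℝ) →L[ℝ] ℝ :=
  LinearMap.toContinuousLinearMap
    { toFun := fun v => K ⬝ᵥ v
      map_add' := by intro a b; simp [dotProduct_add]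
      map_smul' := by intro c a; simp [dotProduct_smul] }

@[simp] lemma dotCLM_apply (K v : Fin n → ℝ) : dotCLM K v = K ⬝ᵥ v := rfl

/-- the state flow associated to a matrix, input function and initial state -/
def flow (A : Matrix (Fin n) (Fin n) ℝ) (B X : Fin n → ℝ) (D : ℝ) (u : ℝ → ℝ) (x : ℝ) :
    Fin n → ℝ :=
  (exp ((D * x) • A)).mulVec
    (X + D • ∫ y in (0:ℝ)..x, u y • (exp (((-D) * y) • A)).mulVec B)

lemma cont_integrand (A : Matrix (Fin n) (Fin n) ℝ) (B : Fin n → ℝ) (D : ℝ) {u : ℝ → ℝ}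
    (hu : Continuous u) :
    Continuous (fun y : ℝ => u y • (exp (((-D) * y) • A)).mulVec B) := by
  apply hu.smul
  have h1 : Continuous (fun y : ℝ => exp (((-D) * y) • A)) :=
    exp_continuous.comp ((continuous_const.mul continuous_id).smul continuous_const)
  exact (mulVecCLM B).continuous.comp h1

lemma hasDerivAt_flow (A : Matrix (Fin n) (Fin n) ℝ) (B X : Fin n → ℝ) (D : ℝ) {u : ℝ → ℝ}
    (hu : Continuous u) (x : ℝ) :
    HasDerivAt (flow A B X D u)
      (D • (A.mulVec (flow A B X D u x) + u x • B)) x := by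
  have hint := cont_integrand A B D hu
  have hI : HasDerivAt (fun t : ℝ => X + D • ∫ y in (0:ℝ)..t, u y • (exp (((-D) * y) • A)).mulVec B)
      (D • (u x • (exp (((-D) * x) • A)).mulVec B)) x := by
    exact ((hint.integral_hasStrictDerivAt 0 x).hasDerivAt.const_smul D).const_add X
  have hM : HasDerivAt (fun t : ℝ => toCLM (exp ((D * t) • A)))
      (toCLM (D • (A * exp ((D * x) • A)))) x :=
    (toCLM.hasFDerivAt.comp_hasDerivAt x (hasDerivAt_expM A D x))
  have h := hM.clm_apply hI
  have : flow A B X D u = fun t => toCLM (exp ((D * t) • A))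
      (X + D • ∫ y in (0:ℝ)..t, u y • (exp (((-D) * y) • A)).mulVec B) := rfl
  rw [this]
  refine h.congr_deriv (Eq.symm ?_)
  have hee : exp ((D * x) • A) * exp (((-D) * x) • A) = 1 := by
    have h2 := exp_mul_exp_neg (n := n) A (D * x)
    have : ((-D) * x) • A = (-(D * x)) • A := by ring_nf
    rw [this]; exact h2
  simp only [toCLM_apply, Matrix.smul_mulVec, Matrix.mulVec_smul,
    Matrix.mulVec_mulVec, hee, Matrix.one_mulVec, smul_add]

lemma continuous_flow (A : Matrix (Fin n) (Fin n) ℝ) (B X : Fin n → ℝ) (D : ℝ) {u : ℝ → ℝ}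
    (hu : Continuous u) : Continuous (flow A B X D u) :=
  continuous_iff_continuousAt.2 fun x => (hasDerivAt_flow A B X D hu x).continuousAt

lemma flow_zero (A : Matrix (Fin n) (Fin n) ℝ) (B X : Fin n → ℝ) (D : ℝ) (u : ℝ → ℝ) :
    flow A B X D u 0 = X := by
  simp [flow, intervalIntegral.integral_same, exp_zero]

lemma eq_zero_of_hasDerivAt (M : Matrix (Fin n) (Fin n) ℝ) (D : ℝ) {E : ℝ → Fin n → ℝ}
    (hE0 : E 0 = 0) (hE : ∀ x, HasDerivAt E (D • M.mulVec (E x)) x) : ∀ x, E x = 0 := by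
  set G : ℝ → Fin n → ℝ := fun x => (exp (((-D) * x) • M)).mulVec (E x) with hG
  have hGd : ∀ x, HasDerivAt G 0 x := by
    intro x
    have hM : HasDerivAt (fun t : ℝ => toCLM (exp (((-D) * t) • M)))
        (toCLM ((-D) • (M * exp (((-D) * x) • M)))) x :=
      toCLM.hasFDerivAt.comp_hasDerivAt x (hasDerivAt_expM M (-D) x)
    have h := hM.clm_apply (hE x)
    have hcomm : M * exp (((-D) * x) • M) = exp (((-D) * x) • M) * M :=
      (((Commute.refl M).smul_left ((-D) * x)).exp_left).symm
    refine h.congr_deriv (Eq.symm ?_)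
    simp only [toCLM_apply, Matrix.smul_mulVec, Matrix.mulVec_smul,
      Matrix.mulVec_mulVec, hcomm]
    rw [← Matrix.mulVec_mulVec]
    simp only [neg_smul, smul_smul]
    module
  have hGc : ∀ x, G x = G 0 := by
    intro x
    exact is_const_of_deriv_eq_zero (fun t => (hGd t).differentiableAt) (fun t => (hGd t).deriv) x 0
  intro x
  have h0 : G x = 0 := by
    rw [hGc x, hG]; simp [hE0]
  have : E x = (exp ((D * x) • M)).mulVec (G x) := by
    rw [hG]
    simp only [Matrix.mulVec_mulVec]
    have hee : exp ((D * x) • M) * exp (((-D) * x) • M) = 1 := by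
      have h2 := exp_mul_exp_neg (n := n) M (D * x)
      have : ((-D) * x) • M = (-(D * x)) • M := by ring_nf
      rw [this]; exact h2
    rw [hee, Matrix.one_mulVec]
  rw [this, h0, Matrix.mulVec_zero]

lemma exp_split (A : Matrix (Fin n) (Fin n) ℝ) (D x y : ℝ) :
    exp ((D * (x - y)) • A) = exp ((D * x) • A) * exp (((-D) * y) • A) := by
  rw [← Matrix.exp_add_of_commute _ _ (((Commute.refl A).smul_left _).smul_right _),
    ← add_smul]
  ring_nf

lemma scalar_eq (A : Matrix (Fin n) (Fin n) ℝ) (B K X : Fin n → ℝ) (D : ℝ) {u : ℝ → ℝ}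
    (hu : Continuous u) (x : ℝ) :
    K ⬝ᵥ (exp ((D * x) • A)).mulVec X
      + D * ∫ y in (0:ℝ)..x, (K ⬝ᵥ (exp ((D * (x - y)) • A)).mulVec B) * u y
      = K ⬝ᵥ flow A B X D u x := by
  rw [flow, Matrix.mulVec_add, dotProduct_add]
  congr 1
  rw [Matrix.mulVec_smul, dotProduct_smul, smul_eq_mul]
  congr 1
  set L : (Fin n → ℝ) →L[ℝ] ℝ := (dotCLM K).comp (toCLM (exp ((D * x) • A))) with hL
  have hint : IntervalIntegrable (fun y : ℝ => u y • (exp (((-D) * y) • A)).mulVec B)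
      volume 0 x := (cont_integrand A B D hu).intervalIntegrable _ _
  have h := L.intervalIntegral_comp_comm hint
  have h2 : K ⬝ᵥ exp ((D * x) • A) *ᵥ
      (∫ y in (0:ℝ)..x, u y • (exp (((-D) * y) • A)).mulVec B)
      = L (∫ y in (0:ℝ)..x, u y • (exp (((-D) * y) • A)).mulVec B) := rfl
  rw [h2, ← h]
  apply intervalIntegral.integral_congr
  intro y _
  simp only [hL, ContinuousLinearMap.comp_apply, toCLM_apply, dotCLM_apply]
  rw [exp_split A D x y, ← Matrix.mulVec_mulVec, Matrix.mulVec_smul, dotProduct_smul,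
    smul_eq_mul, mul_comm]

lemma vecMulVec_mulVec' (B K v : Fin n → ℝ) :
    (vecMulVec B K).mulVec v = (K ⬝ᵥ v) • B := by
  ext i
  simp only [Matrix.mulVec, Matrix.vecMulVec_apply, dotProduct, Pi.smul_apply,
    smul_eq_mul, Finset.sum_mul]
  exact Finset.sum_congr rfl fun j _ => by ring

lemma flows_eq (A : Matrix (Fin n) (Fin n) ℝ) (B K X : Fin n → ℝ) (D : ℝ) {u w : ℝ → ℝ}
    (hu : Continuous u) (hw : Continuous w)
    (h : (∀ x, u x - w x = K ⬝ᵥ flow A B X D u x) ∨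
         (∀ x, u x - w x = K ⬝ᵥ flow (A + vecMulVec B K) B X D w x)) :
    flow A B X D u = flow (A + vecMulVec B K) B X D w := by
  set Y := flow A B X D u with hY
  set Z := flow (A + vecMulVec B K) B X D w with hZ
  set E : ℝ → Fin n → ℝ := fun x => Z x - Y x with hE
  have hE0 : E 0 = 0 := by
    simp [hE, flow_zero, hY, hZ]
  have key : ∀ x, E x = 0 := by
    rcases h with h | h
    · apply eq_zero_of_hasDerivAt (A + vecMulVec B K) D hE0
      intro x
      have hd := (hasDerivAt_flow (A + vecMulVec B K) B X D hw x).sub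
        (hasDerivAt_flow A B X D hu x)
      refine hd.congr_deriv (Eq.symm ?_)
      have hux : u x = w x + K ⬝ᵥ Y x := by have := h x; linarith
      simp only [hE, Matrix.add_mulVec, vecMulVec_mulVec', Matrix.mulVec_sub,
        dotProduct_sub, hux]
      module
    · apply eq_zero_of_hasDerivAt A D hE0
      intro x
      have hd := (hasDerivAt_flow (A + vecMulVec B K) B X D hw x).sub
        (hasDerivAt_flow A B X D hu x)
      refine hd.congr_deriv (Eq.symm ?_)
      have hux : u x = w x + K ⬝ᵥ Z x := by have := h x; linarith
      simp only [hE, Matrix.add_mulVec, vecMulVec_mulVec', Matrix.mulVec_sub,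
        dotProduct_sub, hux]
      module
  funext x
  have h2 := key x
  simp only [hE, sub_eq_zero] at h2
  exact h2.symm

end helpers

lemma proj_mem (t : ℝ) : max 0 (min 1 t) ∈ Icc (0:ℝ) 1 :=
  ⟨le_max_left _ _, max_le zero_le_one (min_le_left _ _)⟩

lemma proj_cont : Continuous fun t : ℝ => max 0 (min 1 t) :=
  continuous_const.max (continuous_const.min continuous_id)

lemma proj_eq {t : ℝ} (ht : t ∈ Icc (0:ℝ) 1) : max 0 (min 1 t) = t := by
  rw [min_eq_right ht.2, max_eq_right ht.1]

end BackSt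

/-- The direct and inverse infinite-dimensional backstepping transformations
are mutually inverse (linear case). -/
theorem backstepping_transformations_mutually_inverse
    (n : ℕ) (A : Matrix (Fin n) (Fin n) ℝ) (B K : Fin n → ℝ) (D : ℝ) (hD : 0 < D)
    (X : Fin n → ℝ) :
    -- direct transformation followed by the inverse transformation
    (∀ uh : ℝ → ℝ, ContinuousOn uh (Icc 0 1) →
      ∀ wh : ℝ → ℝ,
        (∀ x ∈ Icc (0 : ℝ) 1,
          wh x = uh x - K ⬝ᵥ (NormedSpace.exp ((D * x) • A)).mulVec X
            - D * ∫ y in (0 : ℝ)..x,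
                (K ⬝ᵥ (NormedSpace.exp ((D * (x - y)) • A)).mulVec B) * uh y) →
        ∀ x ∈ Icc (0 : ℝ) 1,
          uh x = wh x
            + K ⬝ᵥ (NormedSpace.exp ((D * x) • (A + vecMulVec B K))).mulVec X
            + D * ∫ y in (0 : ℝ)..x,
                (K ⬝ᵥ (NormedSpace.exp
                  ((D * (x - y)) • (A + vecMulVec B K))).mulVec B) * wh y)
    ∧
    -- inverse transformation followed by the direct transformation
    (∀ wh : ℝ → ℝ, ContinuousOn wh (Icc 0 1) →
      ∀ uh : ℝ → ℝ,
        (∀ x ∈ Icc (0 : ℝ) 1,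
          uh x = wh x
            + K ⬝ᵥ (NormedSpace.exp ((D * x) • (A + vecMulVec B K))).mulVec X
            + D * ∫ y in (0 : ℝ)..x,
                (K ⬝ᵥ (NormedSpace.exp
                  ((D * (x - y)) • (A + vecMulVec B K))).mulVec B) * wh y) →
        ∀ x ∈ Icc (0 : ℝ) 1,
          wh x = uh x - K ⬝ᵥ (NormedSpace.exp ((D * x) • A)).mulVec X
            - D * ∫ y in (0 : ℝ)..x,
                (K ⬝ᵥ (NormedSpace.exp ((D * (x - y)) • A)).mulVec B) * uh y) := by
  constructor
  · intro uh hcont wh hwh x hx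
    set u : ℝ → ℝ := fun t => uh (max 0 (min 1 t)) with hu_def
    have hu : Continuous u := hcont.comp_continuous BackSt.proj_cont BackSt.proj_mem
    have hagree : ∀ t ∈ Icc (0:ℝ) 1, u t = uh t := by
      intro t ht; simp only [hu_def]; rw [BackSt.proj_eq ht]
    set w : ℝ → ℝ := fun t => u t - K ⬝ᵥ BackSt.flow A B X D u t with hw_def
    have hKflow : Continuous fun t => K ⬝ᵥ BackSt.flow A B X D u t :=
      (BackSt.dotCLM K).continuous.comp (BackSt.continuous_flow A B X D hu)
    have hw : Continuous w := hu.sub hKflow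
    have hrel : ∀ t, u t - w t = K ⬝ᵥ BackSt.flow A B X D u t := by
      intro t; simp only [hw_def]; ring
    have hfeq := BackSt.flows_eq A B K X D hu hw (Or.inl hrel)
    have hwagree : ∀ t ∈ Icc (0:ℝ) 1, w t = wh t := by
      intro t ht
      have hIu : (∫ y in (0:ℝ)..t,
            (K ⬝ᵥ (NormedSpace.exp ((D * (t - y)) • A)).mulVec B) * uh y)
          = ∫ y in (0:ℝ)..t,
            (K ⬝ᵥ (NormedSpace.exp ((D * (t - y)) • A)).mulVec B) * u y := by
        apply intervalIntegral.integral_congr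
        intro y hy
        rw [Set.uIcc_of_le ht.1] at hy
        simp only [hagree y ⟨hy.1, hy.2.trans ht.2⟩]
      rw [hwh t ht, hIu, ← hagree t ht, sub_sub, BackSt.scalar_eq A B K X D hu t]
    have hIw : (∫ y in (0:ℝ)..x,
          (K ⬝ᵥ (NormedSpace.exp ((D * (x - y)) • (A + vecMulVec B K))).mulVec B) * w y)
        = ∫ y in (0:ℝ)..x,
          (K ⬝ᵥ (NormedSpace.exp ((D * (x - y)) • (A + vecMulVec B K))).mulVec B) * wh y := by
      apply intervalIntegral.integral_congr
      intro y hy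
      rw [Set.uIcc_of_le hx.1] at hy
      simp only [hwagree y ⟨hy.1, hy.2.trans hx.2⟩]
    calc uh x = u x := (hagree x hx).symm
      _ = w x + K ⬝ᵥ BackSt.flow A B X D u x := by simp only [hw_def]; ring
      _ = w x + K ⬝ᵥ BackSt.flow (A + vecMulVec B K) B X D w x := by rw [hfeq]
      _ = w x + (K ⬝ᵥ (NormedSpace.exp ((D * x) • (A + vecMulVec B K))).mulVec X
            + D * ∫ y in (0:ℝ)..x,
              (K ⬝ᵥ (NormedSpace.exp ((D * (x - y)) • (A + vecMulVec B K))).mulVec B) * w y) := by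
          rw [BackSt.scalar_eq (A + vecMulVec B K) B K X D hw x]
      _ = wh x + K ⬝ᵥ (NormedSpace.exp ((D * x) • (A + vecMulVec B K))).mulVec X
            + D * ∫ y in (0:ℝ)..x,
              (K ⬝ᵥ (NormedSpace.exp ((D * (x - y)) • (A + vecMulVec B K))).mulVec B) * wh y := by
          rw [hIw, hwagree x hx]; ring
  · intro wh hcont uh huh x hx
    set w : ℝ → ℝ := fun t => wh (max 0 (min 1 t)) with hw_def
    have hw : Continuous w := hcont.comp_continuous BackSt.proj_cont BackSt.proj_mem
    have hagree : ∀ t ∈ Icc (0:ℝ) 1, w t = wh t := by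
      intro t ht; simp only [hw_def]; rw [BackSt.proj_eq ht]
    set u : ℝ → ℝ := fun t => w t + K ⬝ᵥ BackSt.flow (A + vecMulVec B K) B X D w t with hu_def
    have hKflow : Continuous fun t => K ⬝ᵥ BackSt.flow (A + vecMulVec B K) B X D w t :=
      (BackSt.dotCLM K).continuous.comp (BackSt.continuous_flow (A + vecMulVec B K) B X D hw)
    have hu : Continuous u := hw.add hKflow
    have hrel : ∀ t, u t - w t = K ⬝ᵥ BackSt.flow (A + vecMulVec B K) B X D w t := by
      intro t; simp only [hu_def]; ring
    have hfeq := BackSt.flows_eq A B K X D hu hw (Or.inr hrel)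
    have huagree : ∀ t ∈ Icc (0:ℝ) 1, u t = uh t := by
      intro t ht
      have hIw : (∫ y in (0:ℝ)..t,
            (K ⬝ᵥ (NormedSpace.exp ((D * (t - y)) • (A + vecMulVec B K))).mulVec B) * wh y)
          = ∫ y in (0:ℝ)..t,
            (K ⬝ᵥ (NormedSpace.exp ((D * (t - y)) • (A + vecMulVec B K))).mulVec B) * w y := by
        apply intervalIntegral.integral_congr
        intro y hy
        rw [Set.uIcc_of_le ht.1] at hy
        simp only [hagree y ⟨hy.1, hy.2.trans ht.2⟩]
      rw [huh t ht, hIw, ← hagree t ht, add_assoc,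
        BackSt.scalar_eq (A + vecMulVec B K) B K X D hw t]
    have hIu : (∫ y in (0:ℝ)..x,
          (K ⬝ᵥ (NormedSpace.exp ((D * (x - y)) • A)).mulVec B) * u y)
        = ∫ y in (0:ℝ)..x,
          (K ⬝ᵥ (NormedSpace.exp ((D * (x - y)) • A)).mulVec B) * uh y := by
      apply intervalIntegral.integral_congr
      intro y hy
      rw [Set.uIcc_of_le hx.1] at hy
      simp only [huagree y ⟨hy.1, hy.2.trans hx.2⟩]
    calc wh x = w x := (hagree x hx).symm
      _ = u x - K ⬝ᵥ BackSt.flow (A + vecMulVec B K) B X D w x := by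
          simp only [hu_def]; ring
      _ = u x - K ⬝ᵥ BackSt.flow A B X D u x := by rw [← hfeq]
      _ = u x - (K ⬝ᵥ (NormedSpace.exp ((D * x) • A)).mulVec X
            + D * ∫ y in (0:ℝ)..x,
              (K ⬝ᵥ (NormedSpace.exp ((D * (x - y)) • A)).mulVec B) * u y) := by
          rw [BackSt.scalar_eq A B K X D hu x]
      _ = uh x - K ⬝ᵥ (NormedSpace.exp ((D * x) • A)).mulVec X
            - D * ∫ y in (0:ℝ)..x,
              (K ⬝ᵥ (NormedSpace.exp ((D * (x - y)) • A)).mulVec B) * uh y := by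
          rw [hIu, huagree x hx]; ring
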